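/- For all integers k ≥ 2 and t ≥ 0, α_{2k+t, k−1} = k: the least total degree of a monomial in the (k−1)-st symbolic power of I_{B_{2k+t}} equals k. -/

import Mathlib

open MvPolynomial
open Fin.NatCast

/-- The subtree (arc) of `n-2` consecutive cycle vertices of the `n`-cycle `Q_n`
(on vertices `1,…,n` inside `Fin (n+2)`), starting at vertex `i+1`, for `i = 0,…,n-1`.
The family `arcT n i`, `i < n`, is exactly the family `𝒯` of subtrees of `Q_n`
with `n-2` vertices. -/
def arcT (n i : ℕ) : Finset (Fin (n + 2)) :=
  (Finset.range (n - 2)).image fun t => (((i + t) % n + 1 : ℕ) : Fin (n + 2))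

/-- The monomial prime ideal `⟨x_v⟩ + ⟨x_j : j ∈ S⟩`. -/
noncomputable def apexIdeal (K : Type*) [Field K] (n : ℕ) (v : Fin (n + 2))
    (S : Finset (Fin (n + 2))) : Ideal (MvPolynomial (Fin (n + 2)) K) :=
  Ideal.span (insert (X v) (X '' (S : Set (Fin (n+2))) : Set (MvPolynomial (Fin (n + 2)) K)))

/-- The `m`-th symbolic power `I_{B_n}^{(m)} = ⋂_{S ∈ 𝒯} (I_{[0,S]}^m ∩ I_{[n+1,S]}^m)`. -/
noncomputable def symbPow (K : Type*) [Field K] (n m : ℕ) : Ideal (MvPolynomial (Fin (n + 2)) K) :=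
  ⨅ i ∈ Finset.range n,
    apexIdeal K n 0 (arcT n i) ^ m ⊓ apexIdeal K n ((n + 1 : ℕ) : Fin (n + 2)) (arcT n i) ^ m

/-- The monomial `x_0^{a_0} x_1^{a_1} ⋯ x_{n+1}^{a_{n+1}}`. -/
noncomputable def monom (K : Type*) [Field K] (n : ℕ) (a : Fin (n + 2) → ℕ) :
    MvPolynomial (Fin (n + 2)) K :=
  ∏ i, X i ^ a i

/-- `α_{n,m}`: the least total degree of a monomial lying in `I_{B_n}^{(m)}`. -/
noncomputable def alphaSymb (K : Type*) [Field K] (n m : ℕ) : ℕ :=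
  sInf {d | ∃ a : Fin (n + 2) → ℕ, (∑ i, a i) = d ∧ monom K n a ∈ symbPow K n m}

/-- The Stanley–Reisner ideal `I_{B_n}` of the bipyramid `B_n`, presented by its
quadratic generators: `x_0 x_{n+1}` together with `x_i x_j` for non-adjacent
vertices `i, j` of the cycle `Q_n`. -/
noncomputable def bipyrIdeal (K : Type*) [Field K] (n : ℕ) : Ideal (MvPolynomial (Fin (n + 2)) K) :=
  Ideal.span ({X (0 : Fin (n + 2)) * X ((n + 1 : ℕ) : Fin (n + 2))} ∪
    {p | ∃ i j : ℕ, 1 ≤ i ∧ i ≤ n ∧ 1 ≤ j ∧ j ≤ n ∧ i ≠ j ∧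
      j ≠ i % n + 1 ∧ i ≠ j % n + 1 ∧
      p = X ((i : ℕ) : Fin (n + 2)) * X ((j : ℕ) : Fin (n + 2))})

/-! ### Auxiliary lemmas: monomials in powers of variable ideals -/

section MonomialPow
set_option linter.unusedSectionVars false

variable {σ K : Type*} [Field K] [Fintype σ] [DecidableEq σ]

lemma prod_pow_mem_pow_sum (V : Finset σ) (F : σ → ℕ) (s : Finset σ) (hs : s ⊆ V) :
    (∏ i ∈ s, (X i : MvPolynomial σ K) ^ F i) ∈
      (Ideal.span (X '' (V : Set σ)) : Ideal (MvPolynomial σ K)) ^ (∑ i ∈ s, F i) := by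
  classical
  induction s using Finset.cons_induction with
  | empty => simp
  | cons j s hj ih =>
    rw [Finset.prod_cons, Finset.sum_cons, pow_add]
    exact Ideal.mul_mem_mul
      (Ideal.pow_mem_pow (Ideal.subset_span
        (Set.mem_image_of_mem X (by exact_mod_cast hs (Finset.mem_cons_self j s)))) _)
      (ih (fun x hx => hs (Finset.mem_cons_of_mem hx)))

lemma monomial_mem_pow_of_le (V : Finset σ) (F : σ →₀ ℕ) (m : ℕ)
    (h : m ≤ ∑ v ∈ V, F v) :
    monomial F (1 : K) ∈ (Ideal.span (X '' (V : Set σ)) : Ideal (MvPolynomial σ K)) ^ m := by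
  classical
  have h1 : (monomial F (1 : K)) = ∏ i, (X i : MvPolynomial σ K) ^ F i := by
    rw [monomial_eq, C_1, one_mul, Finsupp.prod_fintype]
    intro i; exact pow_zero _
  rw [h1, ← Finset.prod_mul_prod_compl V]
  exact Ideal.pow_le_pow_right h
    (Ideal.mul_mem_right _ _ (prod_pow_mem_pow_sum V F V (subset_refl V)))

lemma pow_le_span_monomials (V : Finset σ) (m : ℕ) :
    (Ideal.span (X '' (V : Set σ)) : Ideal (MvPolynomial σ K)) ^ m ≤
      Ideal.span ((fun d => monomial d (1 : K)) ''
        {d : σ →₀ ℕ | ↑d.support ⊆ (V : Set σ) ∧ m ≤ d.sum fun _ e => e}) := by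
  classical
  induction m with
  | zero =>
    rw [pow_zero, Ideal.one_eq_top]
    exact le_of_eq (Eq.symm (Ideal.eq_top_of_isUnit_mem _
        (Ideal.subset_span ⟨0, ⟨by simp, by simp⟩, by simp⟩) isUnit_one))
  | succ m ih =>
    rw [pow_succ]
    refine le_trans (Ideal.mul_mono ih (le_refl (Ideal.span (X '' (V : Set σ))))) ?_
    rw [Ideal.span_mul_span']
    refine Ideal.span_le.mpr ?_
    rintro z ⟨x, ⟨d, ⟨hd1, hd2⟩, rfl⟩, y, ⟨v, hv, rfl⟩, rfl⟩
    refine Ideal.subset_span ⟨d + Finsupp.single v 1, ⟨?_, ?_⟩, ?_⟩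
    · refine subset_trans (Finset.coe_subset.mpr Finsupp.support_add) ?_
      rw [Finset.coe_union]
      refine Set.union_subset hd1 (subset_trans ?_ (Set.singleton_subset_iff.mpr hv))
      intro x hx
      rcases Finset.mem_singleton.mp (Finsupp.support_single_subset hx) with rfl
      exact rfl
    · rw [Finsupp.sum_add_index' (fun _ => rfl) (fun _ _ _ => rfl)]
      simpa using add_le_add hd2 (le_refl 1)
    · simp only []
      rw [X, monomial_mul, mul_one]

lemma monomial_mem_pow_iff (V : Finset σ) (F : σ →₀ ℕ) (m : ℕ) :
    monomial F (1 : K) ∈ (Ideal.span (X '' (V : Set σ)) : Ideal (MvPolynomial σ K)) ^ m ↔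
      m ≤ ∑ v ∈ V, F v := by
  constructor
  · intro h
    have h2 := mem_ideal_span_monomial_image.mp (pow_le_span_monomials V m h)
    have hF : F ∈ (monomial F (1 : K)).support := by
      classical
      rw [support_monomial, if_neg (one_ne_zero)]; exact Finset.mem_singleton_self F
    obtain ⟨d, ⟨hd1, hd2⟩, hdF⟩ := h2 F hF
    calc m ≤ d.sum fun _ e => e := hd2
      _ = ∑ i ∈ d.support, d i := rfl
      _ ≤ ∑ v ∈ V, d v := Finset.sum_le_sum_of_subset (Finset.coe_subset.mp hd1)
      _ ≤ ∑ v ∈ V, F v := Finset.sum_le_sum fun i _ => hdF i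
  · exact monomial_mem_pow_of_le V F m

end MonomialPow

/-! ### Auxiliary lemmas: arcs -/

section Arc
variable {n : ℕ}

lemma val_cast_of_lt' {v : ℕ} (h : v < n + 2) : ((v : Fin (n + 2)) : ℕ) = v := by
  simp [Fin.val_natCast, Nat.mod_eq_of_lt h]

lemma arc_val_lt (hn : 0 < n) (i t : ℕ) : (i + t) % n + 1 < n + 2 :=
  by have := Nat.mod_lt (i + t) hn; omega

lemma zero_not_mem_arc (hn : 0 < n) (i : ℕ) : (0 : Fin (n + 2)) ∉ arcT n i := by
  intro h
  obtain ⟨t, _, ht⟩ := Finset.mem_image.mp h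
  have := congrArg Fin.val ht
  rw [val_cast_of_lt' (arc_val_lt hn i t)] at this
  simp at this

lemma np1_not_mem_arc (hn : 0 < n) (i : ℕ) :
    (((n + 1 : ℕ)) : Fin (n + 2)) ∉ arcT n i := by
  intro h
  obtain ⟨t, _, ht⟩ := Finset.mem_image.mp h
  have := congrArg Fin.val ht
  rw [val_cast_of_lt' (arc_val_lt hn i t), val_cast_of_lt' (by omega)] at this
  have := Nat.mod_lt (i + t) hn
  omega

lemma zero_ne_np1 (hn : 0 < n) : (0 : Fin (n + 2)) ≠ (((n + 1 : ℕ)) : Fin (n + 2)) := by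
  intro h
  have := congrArg Fin.val h
  rw [val_cast_of_lt' (by omega)] at this
  simp at this

lemma arc_inj (hn : 0 < n) (i : ℕ) : ∀ t ∈ Finset.range (n - 2), ∀ t' ∈ Finset.range (n - 2),
    ((((i + t) % n + 1 : ℕ)) : Fin (n + 2)) = (((i + t') % n + 1 : ℕ) : Fin (n + 2)) → t = t' := by
  intro t ht t' ht' h
  rw [Finset.mem_range] at ht ht'
  have h2 := congrArg Fin.val h
  rw [val_cast_of_lt' (arc_val_lt hn i t), val_cast_of_lt' (arc_val_lt hn i t')] at h2
  have h3 : (i + t) % n = (i + t') % n := by omega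
  have h4 : t % n = t' % n := Nat.ModEq.add_left_cancel' i h3
  rw [Nat.mod_eq_of_lt (by omega), Nat.mod_eq_of_lt (by omega)] at h4
  exact h4

lemma sum_arc (hn : 0 < n) (i : ℕ) (g : Fin (n + 2) → ℕ) :
    ∑ j ∈ arcT n i, g j = ∑ t ∈ Finset.range (n - 2), g (((i + t) % n + 1 : ℕ) : Fin (n + 2)) :=
  Finset.sum_image (arc_inj hn i)

lemma missed (hn : 3 ≤ n) {l : ℕ} (hl1 : 1 ≤ l) (hl2 : l ≤ n) :
    ((l : ℕ) : Fin (n + 2)) ∉ arcT n (l % n) := by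
  intro h
  obtain ⟨t, ht, h2⟩ := Finset.mem_image.mp h
  rw [Finset.mem_range] at ht
  have h3 := congrArg Fin.val h2
  rw [val_cast_of_lt' (arc_val_lt (by omega) (l % n) t), val_cast_of_lt' (by omega)] at h3
  have h4 : (l % n + t) % n = l - 1 := by omega
  have h5 : (l + t) % n = l - 1 := by
    rw [← Nat.ModEq.add_right t (Nat.mod_modEq l n)]; exact h4
  have h6 : (l - 1 + (t + 1)) % n = (l - 1 + 0) % n := by
    have e1 : l - 1 + (t + 1) = l + t := by omega
    rw [e1, h5, add_zero, Nat.mod_eq_of_lt (show l - 1 < n by omega)]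
  have h7 : (t + 1) % n = 0 % n := Nat.ModEq.add_left_cancel' (l - 1) h6
  have h8 : n ∣ t + 1 := Nat.modEq_zero_iff_dvd.mp h7
  have := Nat.le_of_dvd (by omega) h8
  omega

end Arc

/-! ### Membership criterion for `symbPow` -/

section Criterion

variable (K : Type*) [Field K]

lemma monom_eq_monomial (n : ℕ) (a : Fin (n + 2) → ℕ) :
    monom K n a = monomial (Finsupp.equivFunOnFinite.symm a) (1 : K) := by
  rw [monomial_eq, C_1, one_mul, Finsupp.prod_fintype]
  · unfold monom
    exact Finset.prod_congr rfl fun i _ => by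
      rw [Finsupp.coe_equivFunOnFinite_symm]
  · intro i; exact pow_zero _

lemma apexIdeal_eq (n : ℕ) (v : Fin (n + 2)) (S : Finset (Fin (n + 2))) :
    apexIdeal K n v S =
      Ideal.span (X '' ((insert v S : Finset (Fin (n + 2))) : Set (Fin (n + 2)))) := by
  unfold apexIdeal
  rw [Finset.coe_insert, Set.image_insert_eq]

lemma monom_mem_apex_pow_iff (n : ℕ) (v : Fin (n + 2)) (S : Finset (Fin (n + 2)))
    (hv : v ∉ S) (a : Fin (n + 2) → ℕ) (m : ℕ) :
    monom K n a ∈ apexIdeal K n v S ^ m ↔ m ≤ a v + ∑ j ∈ S, a j := by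
  rw [monom_eq_monomial, apexIdeal_eq, monomial_mem_pow_iff, Finset.sum_insert hv]
  simp [Finsupp.coe_equivFunOnFinite_symm]

lemma mem_symbPow_iff (n m : ℕ) (hn : 3 ≤ n) (a : Fin (n + 2) → ℕ) :
    monom K n a ∈ symbPow K n m ↔ ∀ i ∈ Finset.range n,
      (m ≤ a 0 + ∑ j ∈ arcT n i, a j) ∧
      (m ≤ a (((n + 1 : ℕ)) : Fin (n + 2)) + ∑ j ∈ arcT n i, a j) := by
  unfold symbPow
  rw [Submodule.mem_iInf]
  refine forall_congr' fun i => ?_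
  rw [Submodule.mem_iInf]
  refine forall_congr' fun hi => ?_
  rw [Submodule.mem_inf,
    monom_mem_apex_pow_iff K n _ _ (zero_not_mem_arc (by omega) i) a m,
    monom_mem_apex_pow_iff K n _ _ (np1_not_mem_arc (by omega) i) a m]

end Criterion

/-! ### Counting lemmas for the upper bound -/

section Count

lemma sum_indicator_odd (k N : ℕ) (hN : 2 * k ≤ N) :
    ∑ l ∈ Finset.range N, (if l % 2 = 1 ∧ l < 2 * k then 1 else 0) = k := by
  have key : ∀ j ≤ k, ∑ l ∈ Finset.range (2 * j),
      (if l % 2 = 1 ∧ l < 2 * k then 1 else 0) = j := by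
    intro j hj
    induction j with
    | zero => simp
    | succ j ih =>
      have e1 : 2 * (j + 1) = (2 * j) + 1 + 1 := by ring
      rw [e1, Finset.sum_range_succ, Finset.sum_range_succ, ih (by omega)]
      have e2 : ¬((2 * j) % 2 = 1 ∧ 2 * j < 2 * k) := by omega
      have e3 : (2 * j + 1) % 2 = 1 ∧ 2 * j + 1 < 2 * k := by omega
      rw [if_neg e2, if_pos e3]
  rw [← Finset.sum_subset (Finset.range_subset_range.mpr hN)
    (fun l _ hl => by rw [Finset.mem_range, not_lt] at hl; rw [if_neg (by omega)])]
  exact key k le_rfl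

lemma rotate_sum (n i : ℕ) (hn : 0 < n) (h : ℕ → ℕ) :
    ∑ t ∈ Finset.range n, h ((i + t) % n) = ∑ r ∈ Finset.range n, h r := by
  have hinj : ∀ t ∈ Finset.range n, ∀ t' ∈ Finset.range n,
      (i + t) % n = (i + t') % n → t = t' := by
    intro t ht t' ht' hh
    rw [Finset.mem_range] at ht ht'
    have h4 : t % n = t' % n := Nat.ModEq.add_left_cancel' i hh
    rwa [Nat.mod_eq_of_lt ht, Nat.mod_eq_of_lt ht'] at h4
  have himg : (Finset.range n).image (fun t => (i + t) % n) = Finset.range n := by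
    apply Finset.eq_of_subset_of_card_le
    · intro r hr
      obtain ⟨t, _, rfl⟩ := Finset.mem_image.mp hr
      exact Finset.mem_range.mpr (Nat.mod_lt _ hn)
    · rw [Finset.card_image_of_injOn (fun t ht t' ht' => hinj t ht t' ht')]
  conv_rhs => rw [← himg]
  rw [Finset.sum_image hinj]

end Count

/-! ### Main theorem -/

/-- For all `k ≥ 2` and `t ≥ 0`: `α_{2k+t, k-1} = k`. -/
theorem alpha_stationary (K : Type*) [Field K] (k t : ℕ) (hk : 2 ≤ k) :
    alphaSymb K (2 * k + t) (k - 1) = k := by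
  set n := 2 * k + t with hn_def
  have hn3 : 3 ≤ n := by omega
  have hn0 : 0 < n := by omega
  set m := k - 1 with hm_def
  -- the witness exponent vector
  set f : ℕ → ℕ := fun l => if l % 2 = 1 ∧ l < 2 * k then 1 else 0 with hf_def
  set a : Fin (n + 2) → ℕ := fun j => f (j : ℕ) with ha_def
  -- total degree of the witness is k
  have hsum : (∑ i, a i) = k := by
    rw [ha_def]
    rw [Fin.sum_univ_eq_sum_range (fun l => f l) (n + 2)]
    exact sum_indicator_odd k (n + 2) (by omega)
  -- arc sums of the witness are at least k - 1
  have harc : ∀ i ∈ Finset.range n, m ≤ ∑ j ∈ arcT n i, a j := by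
    intro i hi
    rw [sum_arc hn0 i a]
    have hval : ∀ tt : ℕ, a (((i + tt) % n + 1 : ℕ) : Fin (n + 2)) = f ((i + tt) % n + 1) := by
      intro tt
      rw [ha_def]
      simp only []
      rw [val_cast_of_lt' (arc_val_lt hn0 i tt)]
    simp only [hval]
    have hfull : ∑ tt ∈ Finset.range n, f ((i + tt) % n + 1) = k := by
      rw [rotate_sum n i hn0 (fun r => f (r + 1))]
      have h1 := sum_indicator_odd k (n + 1) (by omega)
      rw [← hf_def, Finset.sum_range_succ' (fun l => f l) n] at h1
      have h2 : f 0 = 0 := by rw [hf_def]; simp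
      omega
    have hsplit : ∑ tt ∈ Finset.range n, f ((i + tt) % n + 1)
        = (∑ tt ∈ Finset.range (n - 2), f ((i + tt) % n + 1))
          + f ((i + (n - 2)) % n + 1) + f ((i + (n - 1)) % n + 1) := by
      have e0 : Finset.range n = Finset.range ((n - 2) + 1 + 1) := by
        rw [show (n - 2) + 1 + 1 = n by omega]
      rw [e0, Finset.sum_range_succ, Finset.sum_range_succ, show n - 2 + 1 = n - 1 by omega]
    have homit : f ((i + (n - 2)) % n + 1) + f ((i + (n - 1)) % n + 1) ≤ 1 := by
      set r1 := (i + (n - 2)) % n with hr1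
      have hr1lt : r1 < n := Nat.mod_lt _ hn0
      have hr2 : (i + (n - 1)) % n = (r1 + 1) % n := by
        have e1 : i + (n - 1) = i + (n - 2) + 1 := by omega
        rw [e1]
        exact ((Nat.mod_modEq (i + (n - 2)) n).add_right 1).symm
      rw [hr2]
      set r2 := (r1 + 1) % n with hr2d
      have hcase : r2 = r1 + 1 ∨ (r1 + 1 = n ∧ r2 = 0) := by
        rcases lt_or_eq_of_le (Nat.succ_le_of_lt hr1lt) with hlt | heq
        · left; rw [hr2d, Nat.mod_eq_of_lt hlt]
        · right; exact ⟨heq, by rw [hr2d, show r1 + 1 = n from heq, Nat.mod_self]⟩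
      rw [hf_def]
      simp only []
      split_ifs with hc1 hc2 hc2
      · rcases hcase with hA | ⟨hB1, hB2⟩
        · omega
        · omega
      all_goals omega
    omega
  -- membership of the witness
  have hmem : monom K n a ∈ symbPow K n m := by
    rw [mem_symbPow_iff K n m hn3 a]
    intro i hi
    exact ⟨le_trans (harc i hi) (Nat.le_add_left _ _),
      le_trans (harc i hi) (Nat.le_add_left _ _)⟩
  -- lower bound
  have hlb : ∀ d ∈ {d | ∃ b : Fin (n + 2) → ℕ,
      (∑ i, b i) = d ∧ monom K n b ∈ symbPow K n m}, k ≤ d := by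
    rintro d ⟨b, hbd, hbmem⟩
    by_contra hcon
    push_neg at hcon
    have hdm : d ≤ m := by omega
    rw [mem_symbPow_iff K n m hn3 b] at hbmem
    have h0n : (0 : ℕ) ∈ Finset.range n := Finset.mem_range.mpr hn0
    -- generic bound: sum over any subset is at most d
    have hsub : ∀ s : Finset (Fin (n + 2)), ∑ j ∈ s, b j ≤ d := by
      intro s
      rw [← hbd]
      exact Finset.sum_le_sum_of_subset (Finset.subset_univ s)
    have hb0 : b 0 = 0 ∧ b (((n + 1 : ℕ)) : Fin (n + 2)) = 0 := by
      obtain ⟨h1, h2⟩ := hbmem 0 h0n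
      have hins : b (((n + 1 : ℕ)) : Fin (n + 2)) + (b 0 + ∑ j ∈ arcT n 0, b j) ≤ d := by
        rw [← Finset.sum_insert (zero_not_mem_arc hn0 0),
          ← Finset.sum_insert (by
            rw [Finset.mem_insert]
            push_neg
            exact ⟨Ne.symm (zero_ne_np1 hn0), np1_not_mem_arc hn0 0⟩)]
        exact hsub _
      constructor <;> omega
    -- all cycle values vanish
    have hcyc : ∀ j : Fin (n + 2), b j = 0 := by
      intro j
      rcases eq_or_ne j 0 with rfl | hj0
      · exact hb0.1
      rcases eq_or_ne j (((n + 1 : ℕ)) : Fin (n + 2)) with rfl | hjn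
      · exact hb0.2
      have hjval : 1 ≤ (j : ℕ) ∧ (j : ℕ) ≤ n := by
        have h2 := j.isLt
        constructor
        · by_contra hc
          have hz : ((0 : Fin (n + 2)) : ℕ) = 0 := rfl
          exact hj0 (Fin.ext (by omega))
        · by_contra hc
          push_neg at hc
          apply hjn
          apply Fin.ext
          rw [val_cast_of_lt' (by omega)]
          omega
      have hmiss : j ∉ arcT n ((j : ℕ) % n) := by
        have := missed hn3 hjval.1 hjval.2
        rwa [Fin.cast_val_eq_self j] at this
      have hin : (j : ℕ) % n ∈ Finset.range n := Finset.mem_range.mpr (Nat.mod_lt _ hn0)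
      obtain ⟨h1, _⟩ := hbmem _ hin
      have h3 : b j + ∑ jj ∈ arcT n ((j : ℕ) % n), b jj ≤ d := by
        rw [← Finset.sum_insert hmiss]
        exact hsub _
      rw [hb0.1] at h1
      omega
    have : d = 0 := by
      rw [← hbd]
      exact Finset.sum_eq_zero fun j _ => hcyc j
    obtain ⟨h1, _⟩ := hbmem 0 h0n
    rw [hb0.1, Finset.sum_eq_zero fun j _ => hcyc j] at h1
    omega
  -- conclude
  unfold alphaSymb
  refine le_antisymm (Nat.sInf_le ⟨a, hsum, hmem⟩) (le_csInf ⟨k, a, hsum, hmem⟩ hlb)
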